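/- Fix $c>0$ and $\varepsilon>0$, and let $u:\mathbb{R}\to\mathbb{R}^2$ be a bounded full solution of $\dot x=f_c(t,x)$. Then $u$ is weakly hyperbolic: the linearized equation $\dot w=\phi'(-t)\,Df^{-}_c(u(t))\,w+\phi'(t)\,Df^{+}_\varepsilon(u(t))\,w$ has no bounded full solution $w:\mathbb{R}\to\mathbb{R}^2$ other than $w\equiv 0$. -/

import Mathlib

/-- `f⁻_c(x₁,x₂) = (x₁, -x₂ + 3x₁² - c)` -/
def fminus (c : ℝ) : ℝ × ℝ → ℝ × ℝ := fun x => (x.1, -x.2 + 3 * x.1 ^ 2 - c)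

/-- `f⁺_ε(x₁,x₂) = (-x₁ + εx₂, x₂)` -/
def fplus (ε : ℝ) : ℝ × ℝ → ℝ × ℝ := fun x => (-x.1 + ε * x.2, x.2)

/-- `f_c(t,x) = φ'(-t) f⁻_c(x) + φ'(t) f⁺_ε(x)`, where `dφ = φ'`. -/
def fc (c ε : ℝ) (dφ : ℝ → ℝ) (t : ℝ) (x : ℝ × ℝ) : ℝ × ℝ :=
  dφ (-t) • fminus c x + dφ t • fplus ε x

/-- Jacobian of `f⁻_c` at `x`, applied to `w`:
`Df⁻_c(x) w = (w₁, 6x₁w₁ - w₂)`. -/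
def Dfminus (x w : ℝ × ℝ) : ℝ × ℝ := (w.1, 6 * x.1 * w.1 - w.2)

/-- Jacobian of `f⁺_ε`, applied to `w`: `Df⁺_ε w = (-w₁ + εw₂, w₂)`. -/
def Dfplus (ε : ℝ) (w : ℝ × ℝ) : ℝ × ℝ := (-w.1 + ε * w.2, w.2)

open Real Filter Topology

/-- A function with vanishing derivative on `[0,∞)` is constant there. -/
lemma myConst_Ici {F : ℝ → ℝ} (h : ∀ t, 0 ≤ t → HasDerivAt F 0 t) :
    ∀ t, 0 ≤ t → F t = F 0 := fun t ht =>
  constant_of_has_deriv_right_zero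
    (fun s hs => (h s hs.1).continuousAt.continuousWithinAt)
    (fun s hs => (h s hs.1).hasDerivWithinAt) t ⟨ht, le_rfl⟩

/-- A function with vanishing derivative on `(-∞,0]` is constant there. -/
lemma myConst_Iic {F : ℝ → ℝ} (h : ∀ t, t ≤ 0 → HasDerivAt F 0 t) :
    ∀ t, t ≤ 0 → F t = F 0 := fun t ht =>
  (constant_of_has_deriv_right_zero (a := t) (b := 0)
    (fun s hs => (h s hs.2).continuousAt.continuousWithinAt)
    (fun s hs => (h s hs.2.le).hasDerivWithinAt) 0 ⟨ht, le_rfl⟩).symm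

/-- Integrating-factor derivative computation. -/
lemma ode_deriv {y A : ℝ → ℝ} {a s : ℝ} (hA : HasDerivAt A a s)
    (hy : HasDerivAt y (a * y s) s) :
    HasDerivAt (fun r => y r * Real.exp (-(A r))) 0 s := by
  have h1 : HasDerivAt (fun r => Real.exp (-(A r))) (Real.exp (-(A s)) * (-a)) s := hA.neg.exp
  have h2 := hy.mul h1
  refine h2.congr_deriv ?_
  ring

/-- Solve `y' = σ φ' y` on `[0, ∞)`. -/
lemma solve_Ici (φ dφ : ℝ → ℝ) (hφ : ∀ t, HasDerivAt φ (dφ t) t) (hφ0 : φ 0 = 0)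
    (y : ℝ → ℝ) (σ : ℝ) (hy : ∀ t, 0 ≤ t → HasDerivAt y (σ * dφ t * y t) t) :
    ∀ t, 0 ≤ t → y t = y 0 * Real.exp (σ * φ t) := by
  have key : ∀ t, 0 ≤ t → y t * Real.exp (-(σ * φ t)) = y 0 * Real.exp (-(σ * φ 0)) :=
    myConst_Ici (fun t ht => ode_deriv ((hφ t).const_mul σ) (hy t ht))
  intro t ht
  have h := key t ht
  rw [hφ0, mul_zero, neg_zero, Real.exp_zero, mul_one] at h
  have := congrArg (· * Real.exp (σ * φ t)) h
  simpa [mul_assoc, ← Real.exp_add] using this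

/-- Solve `y' = σ φ'(-t) y` on `(-∞, 0]`. -/
lemma solve_Iic (φ dφ : ℝ → ℝ) (hφ : ∀ t, HasDerivAt φ (dφ t) t) (hφ0 : φ 0 = 0)
    (y : ℝ → ℝ) (σ : ℝ) (hy : ∀ t, t ≤ 0 → HasDerivAt y (σ * dφ (-t) * y t) t) :
    ∀ t, t ≤ 0 → y t = y 0 * Real.exp (-(σ * φ (-t))) := by
  have hA : ∀ t : ℝ, HasDerivAt (fun s => -(σ * φ (-s))) (σ * dφ (-t)) t := by
    intro t
    have h0 : HasDerivAt (fun s : ℝ => φ (-s)) (dφ (-t) * (-1)) t :=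
      (hφ (-t)).comp t (hasDerivAt_neg t)
    have := (h0.const_mul σ).neg
    refine this.congr_deriv ?_
    ring
  have key : ∀ t, t ≤ 0 →
      y t * Real.exp (-(-(σ * φ (-t)))) = y 0 * Real.exp (-(-(σ * φ (-0)))) :=
    myConst_Iic (fun t ht => ode_deriv (hA t) (hy t ht))
  intro t ht
  have h := key t ht
  rw [neg_zero, hφ0, mul_zero, neg_zero, neg_zero, Real.exp_zero, mul_one, neg_neg] at h
  have := congrArg (· * Real.exp (-(σ * φ (-t)))) h
  simpa [mul_assoc, ← Real.exp_add] using this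

/-- A quantity dominated by `M e^t` for all `t ≤ -1` vanishes. -/
lemma vanish {C M : ℝ} (h : ∀ t : ℝ, t ≤ -1 → |C| ≤ M * Real.exp t) : C = 0 := by
  have h0 : Tendsto (fun t : ℝ => M * Real.exp t) atBot (𝓝 (M * 0)) :=
    Real.tendsto_exp_atBot.const_mul M
  rw [mul_zero] at h0
  have : |C| ≤ 0 := ge_of_tendsto h0 (eventually_atBot.2 ⟨-1, h⟩)
  exact abs_eq_zero.mp (le_antisymm this (abs_nonneg C))

lemma bound_flip {a b s : ℝ} (h : a * Real.exp (-s) ≤ b) : a ≤ b * Real.exp s := by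
  have := mul_le_mul_of_nonneg_right h (Real.exp_pos s).le
  rwa [mul_assoc, ← Real.exp_add, neg_add_cancel, Real.exp_zero, mul_one] at this

/-- `φ' = 0` on `(-∞, 0]`. -/
lemma dphi_zero {φ dφ : ℝ → ℝ} (hφ : ∀ t : ℝ, HasDerivAt φ (dφ t) t)
    (hφ0 : ∀ t ≤ (0:ℝ), φ t = 0) : ∀ s ≤ (0:ℝ), dφ s = 0 := by
  intro s hs
  have h1 : HasDerivWithinAt φ (dφ s) (Set.Iic 0) s := (hφ s).hasDerivWithinAt
  have h2 : HasDerivWithinAt φ 0 (Set.Iic 0) s :=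
    (hasDerivWithinAt_const s _ (0:ℝ)).congr (fun y hy => hφ0 y hy) (hφ0 s hs)
  have e1 := h1.derivWithin (uniqueDiffOn_Iic 0 s hs)
  have e2 := h2.derivWithin (uniqueDiffOn_Iic 0 s hs)
  rw [← e1]; exact e2

/-- For `c > 0`, every bounded full solution `u` of
`ẋ = f_c(t,x)` is weakly hyperbolic: the linearization
`ẇ = φ'(-t) Df⁻_c(u(t)) w + φ'(t) Df⁺_ε w` has no bounded full solution
other than `w ≡ 0`. -/
theorem stmt11 (c ε : ℝ) (hc : 0 < c) (hε : 0 < ε) (φ dφ : ℝ → ℝ)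
    (hφ : ∀ t : ℝ, HasDerivAt φ (dφ t) t) (hdc : Continuous dφ)
    (hφ0 : ∀ t ≤ (0:ℝ), φ t = 0) (hφ1 : ∀ t ≥ (1:ℝ), φ t = t)
    (hdpos : ∀ t : ℝ, 0 ≤ dφ t)
    (u : ℝ → ℝ × ℝ)
    (hu : ∀ t : ℝ, HasDerivAt u (fc c ε dφ t (u t)) t)
    (hub : Bornology.IsBounded (Set.range u))
    (w : ℝ → ℝ × ℝ)
    (hw : ∀ t : ℝ, HasDerivAt w
      (dφ (-t) • Dfminus (u t) (w t) + dφ t • Dfplus ε (w t)) t)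
    (hwb : Bornology.IsBounded (Set.range w)) :
    ∀ t : ℝ, w t = 0 := by
  obtain ⟨Mu, hMu⟩ := isBounded_iff_forall_norm_le.mp hub
  obtain ⟨Mw, hMw⟩ := isBounded_iff_forall_norm_le.mp hwb
  have hMu' : ∀ t : ℝ, |(u t).2| ≤ Mu := fun t => by
    have := norm_snd_le (u t)
    rw [Real.norm_eq_abs] at this
    exact this.trans (hMu _ ⟨t, rfl⟩)
  have hMw' : ∀ t : ℝ, |(w t).2| ≤ Mw := fun t => by
    have := norm_snd_le (w t)
    rw [Real.norm_eq_abs] at this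
    exact this.trans (hMw _ ⟨t, rfl⟩)
  have φ0 : φ 0 = 0 := hφ0 0 le_rfl
  have d0 := dphi_zero hφ hφ0
  -- component derivatives
  have hu1d : ∀ t, HasDerivAt (fun s => (u s).1)
      (dφ (-t) * (u t).1 + dφ t * (-(u t).1 + ε * (u t).2)) t := fun t => by
    simpa [fc, fminus, fplus] using ((hu t).hasFDerivAt.fst).hasDerivAt
  have hu2d : ∀ t, HasDerivAt (fun s => (u s).2)
      (dφ (-t) * (-(u t).2 + 3 * (u t).1 ^ 2 - c) + dφ t * (u t).2) t := fun t => by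
    simpa [fc, fminus, fplus] using ((hu t).hasFDerivAt.snd).hasDerivAt
  have hw1d : ∀ t, HasDerivAt (fun s => (w s).1)
      (dφ (-t) * (w t).1 + dφ t * (-(w t).1 + ε * (w t).2)) t := fun t => by
    simpa [Dfminus, Dfplus] using ((hw t).hasFDerivAt.fst).hasDerivAt
  have hw2d : ∀ t, HasDerivAt (fun s => (w s).2)
      (dφ (-t) * (6 * (u t).1 * (w t).1 - (w t).2) + dφ t * (w t).2) t := fun t => by
    simpa [Dfminus, Dfplus] using ((hw t).hasFDerivAt.snd).hasDerivAt
  -- forward: second components satisfy y' = φ'(t) y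
  have hu2f : ∀ t, 0 ≤ t → (u t).2 = (u 0).2 * Real.exp (1 * φ t) := by
    refine solve_Ici φ dφ hφ φ0 _ 1 (fun t ht => ?_)
    have h := hu2d t
    rw [d0 (-t) (neg_nonpos.mpr ht)] at h
    show HasDerivAt (fun s => (u s).2) (1 * dφ t * (u t).2) t
    convert h using 1
    ring
  have hw2f : ∀ t, 0 ≤ t → (w t).2 = (w 0).2 * Real.exp (1 * φ t) := by
    refine solve_Ici φ dφ hφ φ0 _ 1 (fun t ht => ?_)
    have h := hw2d t
    rw [d0 (-t) (neg_nonpos.mpr ht)] at h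
    show HasDerivAt (fun s => (w s).2) (1 * dφ t * (w t).2) t
    convert h using 1
    ring
  -- boundedness kills the forward modes
  have hu20 : (u 0).2 = 0 := by
    refine vanish (M := Mu) (fun s hs => ?_)
    have h := hu2f (-s) (by linarith)
    rw [hφ1 (-s) (by linarith), one_mul] at h
    refine bound_flip ?_
    have h1 : |(u 0).2| * Real.exp (-s) = |(u (-s)).2| := by
      rw [h, abs_mul, abs_of_pos (Real.exp_pos _)]
    rw [h1]; exact hMu' (-s)
  have hw20 : (w 0).2 = 0 := by
    refine vanish (M := Mw) (fun s hs => ?_)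
    have h := hw2f (-s) (by linarith)
    rw [hφ1 (-s) (by linarith), one_mul] at h
    refine bound_flip ?_
    have h1 : |(w 0).2| * Real.exp (-s) = |(w (-s)).2| := by
      rw [h, abs_mul, abs_of_pos (Real.exp_pos _)]
    rw [h1]; exact hMw' (-s)
  -- backward: first components
  have hu1b : ∀ t, t ≤ 0 → (u t).1 = (u 0).1 * Real.exp (-(1 * φ (-t))) := by
    refine solve_Iic φ dφ hφ φ0 _ 1 (fun t ht => ?_)
    have h := hu1d t
    rw [d0 t ht] at h
    show HasDerivAt (fun s => (u s).1) (1 * dφ (-t) * (u t).1) t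
    convert h using 1
    ring
  have hw1b : ∀ t, t ≤ 0 → (w t).1 = (w 0).1 * Real.exp (-(1 * φ (-t))) := by
    refine solve_Iic φ dφ hφ φ0 _ 1 (fun t ht => ?_)
    have h := hw1d t
    rw [d0 t ht] at h
    show HasDerivAt (fun s => (w s).1) (1 * dφ (-t) * (w t).1) t
    convert h using 1
    ring
  -- common derivative facts for the particular solutions
  have hE : ∀ t : ℝ, HasDerivAt (fun s : ℝ => Real.exp (-(2 * φ (-s))))
      (Real.exp (-(2 * φ (-t))) * (2 * dφ (-t))) t := by
    intro t
    have h0 : HasDerivAt (fun s : ℝ => φ (-s)) (dφ (-t) * (-1)) t :=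
      (hφ (-t)).comp t (hasDerivAt_neg t)
    have hg : HasDerivAt (fun s : ℝ => -(2 * φ (-s))) (2 * dφ (-t)) t := by
      have := (h0.const_mul 2).neg
      refine this.congr_deriv ?_
      ring
    exact hg.exp
  have hE2 : ∀ t : ℝ, Real.exp (-(2 * φ (-t))) = Real.exp (-(1 * φ (-t))) ^ 2 := by
    intro t
    rw [sq, ← Real.exp_add]
    congr 1
    ring
  -- backward second component of u
  have hzc : ∀ t, t ≤ 0 →
      (u t).2 - ((u 0).1 ^ 2 * Real.exp (-(2 * φ (-t))) - c) =
        ((u 0).2 - ((u 0).1 ^ 2 * Real.exp (-(2 * φ (-0))) - c)) *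
          Real.exp (-(-1 * φ (-t))) := by
    refine solve_Iic φ dφ hφ φ0
      (fun s => (u s).2 - ((u 0).1 ^ 2 * Real.exp (-(2 * φ (-s))) - c)) (-1)
      (fun t ht => ?_)
    have h2 := hu2d t
    rw [d0 t ht] at h2
    have hq : HasDerivAt (fun s => (u 0).1 ^ 2 * Real.exp (-(2 * φ (-s))) - c)
        ((u 0).1 ^ 2 * (Real.exp (-(2 * φ (-t))) * (2 * dφ (-t)))) t :=
      ((hE t).const_mul ((u 0).1 ^ 2)).sub_const c
    have h3 := h2.sub hq
    show HasDerivAt (fun s => (u s).2 - ((u 0).1 ^ 2 * Real.exp (-(2 * φ (-s))) - c))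
      (-1 * dφ (-t) * ((u t).2 - ((u 0).1 ^ 2 * Real.exp (-(2 * φ (-t))) - c))) t
    refine h3.congr_deriv (Eq.symm ?_)
    rw [hu1b t ht]
    linear_combination (3 * dφ (-t) * (u 0).1 ^ 2) * hE2 t
  have hz0 : (u 0).2 - ((u 0).1 ^ 2 * Real.exp (-(2 * φ (-0))) - c) = 0 := by
    refine vanish (M := Mu + (u 0).1 ^ 2 + c) (fun s hs => ?_)
    have h := hzc s (by linarith)
    have hrw : -(-1 * φ (-s)) = φ (-s) := by ring
    rw [hrw, hφ1 (-s) (by linarith)] at h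
    refine bound_flip ?_
    have h1 : |(u 0).2 - ((u 0).1 ^ 2 * Real.exp (-(2 * φ (-0))) - c)| * Real.exp (-s)
        = |(u s).2 - ((u 0).1 ^ 2 * Real.exp (-(2 * φ (-s))) - c)| := by
      rw [hφ1 (-s) (by linarith), h, abs_mul, abs_of_pos (Real.exp_pos _)]
    rw [h1]
    have hex : Real.exp (-(2 * φ (-s))) ≤ 1 := by
      apply Real.exp_le_one_iff.mpr
      rw [hφ1 (-s) (by linarith)]
      linarith
    have hex0 : 0 < Real.exp (-(2 * φ (-s))) := Real.exp_pos _
    have e3 := abs_le.mp (hMu' s)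
    have hsq : 0 ≤ (u 0).1 ^ 2 := sq_nonneg _
    rw [abs_le]
    constructor <;> nlinarith
  have hK : (u 0).1 ^ 2 = c := by
    rw [neg_zero, φ0, mul_zero, neg_zero, Real.exp_zero, mul_one, hu20] at hz0
    linarith
  have hu01 : (u 0).1 ≠ 0 := by
    intro h0
    rw [h0] at hK
    simp at hK
    exact hc.ne' hK.symm
  -- backward second component of w
  have hz2c : ∀ t, t ≤ 0 →
      (w t).2 - 2 * ((u 0).1 * (w 0).1) * Real.exp (-(2 * φ (-t))) =
        ((w 0).2 - 2 * ((u 0).1 * (w 0).1) * Real.exp (-(2 * φ (-0)))) *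
          Real.exp (-(-1 * φ (-t))) := by
    refine solve_Iic φ dφ hφ φ0
      (fun s => (w s).2 - 2 * ((u 0).1 * (w 0).1) * Real.exp (-(2 * φ (-s)))) (-1)
      (fun t ht => ?_)
    have h2 := hw2d t
    rw [d0 t ht] at h2
    have hq : HasDerivAt (fun s => 2 * ((u 0).1 * (w 0).1) * Real.exp (-(2 * φ (-s))))
        (2 * ((u 0).1 * (w 0).1) * (Real.exp (-(2 * φ (-t))) * (2 * dφ (-t)))) t :=
      (hE t).const_mul (2 * ((u 0).1 * (w 0).1))
    have h3 := h2.sub hq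
    show HasDerivAt (fun s => (w s).2 - 2 * ((u 0).1 * (w 0).1) * Real.exp (-(2 * φ (-s))))
      (-1 * dφ (-t) * ((w t).2 - 2 * ((u 0).1 * (w 0).1) * Real.exp (-(2 * φ (-t))))) t
    refine h3.congr_deriv (Eq.symm ?_)
    rw [hu1b t ht, hw1b t ht]
    linear_combination (6 * dφ (-t) * (u 0).1 * (w 0).1) * hE2 t
  have hz20 : (w 0).2 - 2 * ((u 0).1 * (w 0).1) * Real.exp (-(2 * φ (-0))) = 0 := by
    refine vanish (M := Mw + |2 * ((u 0).1 * (w 0).1)|) (fun s hs => ?_)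
    have h := hz2c s (by linarith)
    have hrw : -(-1 * φ (-s)) = φ (-s) := by ring
    rw [hrw, hφ1 (-s) (by linarith)] at h
    refine bound_flip ?_
    have h1 : |(w 0).2 - 2 * ((u 0).1 * (w 0).1) * Real.exp (-(2 * φ (-0)))| * Real.exp (-s)
        = |(w s).2 - 2 * ((u 0).1 * (w 0).1) * Real.exp (-(2 * φ (-s)))| := by
      rw [hφ1 (-s) (by linarith), h, abs_mul, abs_of_pos (Real.exp_pos _)]
    rw [h1]
    have hex : Real.exp (-(2 * φ (-s))) ≤ 1 := by
      apply Real.exp_le_one_iff.mpr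
      rw [hφ1 (-s) (by linarith)]
      linarith
    have hex0 : 0 < Real.exp (-(2 * φ (-s))) := Real.exp_pos _
    have e3 := abs_le.mp (hMw' s)
    have e4 := abs_le.mp (le_refl |2 * ((u 0).1 * (w 0).1)|)
    have e5 := neg_abs_le (2 * ((u 0).1 * (w 0).1))
    have e6 := le_abs_self (2 * ((u 0).1 * (w 0).1))
    rw [abs_le]
    constructor <;> nlinarith
  have hP : (u 0).1 * (w 0).1 = 0 := by
    rw [neg_zero, φ0, mul_zero, neg_zero, Real.exp_zero, mul_one, hw20] at hz20
    linarith
  have hw01 : (w 0).1 = 0 := by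
    rcases mul_eq_zero.mp hP with h | h
    · exact absurd h hu01
    · exact h
  -- conclude: backward
  have hw2b : ∀ t, t ≤ 0 → (w t).2 = 0 := by
    intro t ht
    have h := hz2c t ht
    rw [hw01, hw20] at h
    simpa using h
  have hw1bz : ∀ t, t ≤ 0 → (w t).1 = 0 := by
    intro t ht
    rw [hw1b t ht, hw01, zero_mul]
  -- conclude: forward
  have hw2fz : ∀ t, 0 ≤ t → (w t).2 = 0 := by
    intro t ht
    rw [hw2f t ht, hw20, zero_mul]
  have hw1fz : ∀ t, 0 ≤ t → (w t).1 = 0 := by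
    have key : ∀ t, 0 ≤ t → (w t).1 = (w 0).1 * Real.exp (-1 * φ t) := by
      refine solve_Ici φ dφ hφ φ0 _ (-1) (fun t ht => ?_)
      have h := hw1d t
      rw [d0 (-t) (neg_nonpos.mpr ht), hw2fz t ht] at h
      show HasDerivAt (fun s => (w s).1) (-1 * dφ t * (w t).1) t
      convert h using 1
      ring
    intro t ht
    rw [key t ht, hw01, zero_mul]
  -- finish
  intro t
  rcases le_total t 0 with ht | ht
  · exact Prod.ext (by simpa using hw1bz t ht) (by simpa using hw2b t ht)
  · exact Prod.ext (by simpa using hw1fz t ht) (by simpa using hw2fz t ht)
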